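/- Let X be a connected graph of order at least 3 and let r, s be positive integers with 2 ≤ r ≤ s. Then the Cartesian product K_{r,s} □ X is not well-dominated. -/

import Mathlib

open SimpleGraph

/-- `S` dominates `G`: every vertex is in `S` or adjacent to a vertex of `S`. -/
def Dominates {V : Type*} (G : SimpleGraph V) (S : Set V) : Prop :=
  ∀ v : V, v ∈ S ∨ ∃ u ∈ S, G.Adj u v

/-- `S` is a minimal dominating set of `G`. -/
def MinDom {V : Type*} (G : SimpleGraph V) (S : Set V) : Prop :=
  Dominates G S ∧ ∀ T : Set V, T ⊂ S → ¬ Dominates G T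

/-- `G` is well-dominated: all minimal dominating sets have the same cardinality. -/
def WellDom {V : Type*} (G : SimpleGraph V) : Prop :=
  ∀ S T : Set V, MinDom G S → MinDom G T → S.ncard = T.ncard

/-- `I` is an independent set of `G`. -/
def IndepSet {V : Type*} (G : SimpleGraph V) (I : Set V) : Prop :=
  ∀ a ∈ I, ∀ b ∈ I, ¬ G.Adj a b

/-- `I` is a maximal independent set of `G`. -/
def MaxIndep {V : Type*} (G : SimpleGraph V) (I : Set V) : Prop :=
  IndepSet G I ∧ ∀ J : Set V, IndepSet G J → I ⊆ J → J = I

/-- The closed neighborhood `N[S]` of a set of vertices. -/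
def closedNbhd {V : Type*} (G : SimpleGraph V) (S : Set V) : Set V :=
  {v | v ∈ S ∨ ∃ u ∈ S, G.Adj u v}

/- ### Auxiliary material -/

/-- A dominating set all of whose elements have a private neighbor is a minimal
dominating set. -/
lemma aux9_priv_minDom {V : Type*} (G : SimpleGraph V) (S : Set V)
    (hdom : Dominates G S)
    (hpriv : ∀ d ∈ S, ∃ w, ∀ u, (u = w ∨ G.Adj u w) → u ∈ S → u = d) :
    MinDom G S := by
  refine ⟨hdom, ?_⟩
  intro T hT hdomT
  obtain ⟨d, hdS, hdT⟩ := Set.exists_of_ssubset hT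
  obtain ⟨w, hw⟩ := hpriv d hdS
  rcases hdomT w with hwT | ⟨u, huT, hadj⟩
  · exact hdT ((hw w (Or.inl rfl) (hT.1 hwT)) ▸ hwT)
  · exact hdT ((hw u (Or.inr hadj) (hT.1 huT)) ▸ huT)

/-- The first family of minimal dominating sets of `K □ X`.  Here `P` singles out
one side of the complete bipartite graph `K`, `a0` is a distinguished vertex on the
`P`-side, `b0` one on the other side, and `M` is an independent set of `X`. -/
def aux9DL {W V : Type*} (X : SimpleGraph V) (P : W → Prop) (a0 b0 : W) (M : Set V) :
    Set (W × V) :=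
  {p | (p.1 = a0 ∧ p.2 ∉ M) ∨ (P p.1 ∧ p.1 ≠ a0 ∧ p.2 ∈ M) ∨
    (p.1 = b0 ∧ p.2 ∉ closedNbhd X M)}

/-- The second family: one full side over `u`, the other full side over `v`. -/
def aux9DC {W V : Type*} (P : W → Prop) (u v : V) : Set (W × V) :=
  {p | (P p.1 ∧ p.2 = u) ∨ (¬ P p.1 ∧ p.2 = v)}

lemma aux9DL_minDom {W V : Type*} (K : SimpleGraph W) (X : SimpleGraph V) (P : W → Prop)
    (hK : ∀ a b, K.Adj a b ↔ (P a ∧ ¬ P b ∨ ¬ P a ∧ P b))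
    (a0 a1 b0 b1 : W) (ha0 : P a0) (ha1 : P a1) (ha01 : a1 ≠ a0)
    (hb0 : ¬ P b0) (hb1 : ¬ P b1) (hb01 : b1 ≠ b0)
    (M : Set V) (hMi : ∀ a ∈ M, ∀ b ∈ M, ¬ X.Adj a b)
    (hnb : ∀ v : V, ∃ y, X.Adj v y) :
    MinDom (K □ X) (aux9DL X P a0 b0 M) := by
  apply aux9_priv_minDom
  · -- domination
    rintro ⟨c, x⟩
    by_cases hPc : P c
    · by_cases hca : c = a0
      · by_cases hxM : x ∈ M
        · obtain ⟨y, hy⟩ := hnb x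
          have hyM : y ∉ M := fun hyM => hMi x hxM y hyM hy
          refine Or.inr ⟨(a0, y), Or.inl ⟨rfl, hyM⟩, ?_⟩
          rw [boxProd_adj]
          exact Or.inr ⟨hy.symm, hca.symm⟩
        · exact Or.inl (Or.inl ⟨hca, hxM⟩)
      · by_cases hxM : x ∈ M
        · exact Or.inl (Or.inr (Or.inl ⟨hPc, hca, hxM⟩))
        · by_cases hxN : x ∈ closedNbhd X M
          · have hxN' : x ∈ M ∨ ∃ u ∈ M, X.Adj u x := hxN
            rcases hxN' with hxM' | ⟨m, hmM, hmx⟩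
            · exact absurd hxM' hxM
            · refine Or.inr ⟨(c, m), Or.inr (Or.inl ⟨hPc, hca, hmM⟩), ?_⟩
              rw [boxProd_adj]
              exact Or.inr ⟨hmx, rfl⟩
          · refine Or.inr ⟨(b0, x), Or.inr (Or.inr ⟨rfl, hxN⟩), ?_⟩
            rw [boxProd_adj]
            exact Or.inl ⟨(hK b0 c).2 (Or.inr ⟨hb0, hPc⟩), rfl⟩
    · by_cases hxM : x ∈ M
      · refine Or.inr ⟨(a1, x), Or.inr (Or.inl ⟨ha1, ha01, hxM⟩), ?_⟩
        rw [boxProd_adj]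
        exact Or.inl ⟨(hK a1 c).2 (Or.inl ⟨ha1, hPc⟩), rfl⟩
      · refine Or.inr ⟨(a0, x), Or.inl ⟨rfl, hxM⟩, ?_⟩
        rw [boxProd_adj]
        exact Or.inl ⟨(hK a0 c).2 (Or.inl ⟨ha0, hPc⟩), rfl⟩
  · -- private neighbors
    rintro ⟨c, x⟩ hd
    have hd' : (c = a0 ∧ x ∉ M) ∨ (P c ∧ c ≠ a0 ∧ x ∈ M) ∨
        (c = b0 ∧ x ∉ closedNbhd X M) := hd
    rcases hd' with ⟨hc, hxM⟩ | ⟨hPc, hca, hxM⟩ | ⟨hc, hxN⟩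
    · -- d = (c, x) with c = a0, x ∉ M ; private neighbor (b1, x)
      refine ⟨(b1, x), ?_⟩
      intro u hu huD
      have huD' : (u.1 = a0 ∧ u.2 ∉ M) ∨ (P u.1 ∧ u.1 ≠ a0 ∧ u.2 ∈ M) ∨
          (u.1 = b0 ∧ u.2 ∉ closedNbhd X M) := huD
      rcases hu with heq | hadj
      · have hu1 : u.1 = b1 := by rw [heq]
        rcases huD' with ⟨h1, _⟩ | ⟨h1, _, _⟩ | ⟨h1, _⟩
        · exact absurd (show P b1 from (hu1.symm.trans h1) ▸ ha0) hb1
        · exact absurd (show P b1 from hu1 ▸ h1) hb1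
        · exact absurd (hu1.symm.trans h1) hb01
      · rw [boxProd_adj] at hadj
        have hadj' : K.Adj u.1 b1 ∧ u.2 = x ∨ X.Adj u.2 x ∧ u.1 = b1 := hadj
        rcases hadj' with ⟨hk, h2⟩ | ⟨hXadj, hu1⟩
        · rcases huD' with ⟨h1, _⟩ | ⟨hP1, _, hM1⟩ | ⟨h1, _⟩
          · exact Prod.ext (h1.trans hc.symm) h2
          · exact absurd (show x ∈ M from h2 ▸ hM1) hxM
          · rw [h1] at hk
            rcases (hK _ _).1 hk with ⟨h, _⟩ | ⟨_, h⟩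
            · exact absurd h hb0
            · exact absurd h hb1
        · rcases huD' with ⟨h1, _⟩ | ⟨hP1, _, _⟩ | ⟨h1, _⟩
          · exact absurd (show P b1 from (h1.symm.trans hu1).symm ▸ ha0) hb1
          · exact absurd (show P b1 from hu1 ▸ hP1) hb1
          · exact absurd (hu1.symm.trans h1) hb01
    · -- d = (c, x), P c, c ≠ a0, x ∈ M ; d is its own private neighbor
      refine ⟨(c, x), ?_⟩
      intro u hu huD
      have huD' : (u.1 = a0 ∧ u.2 ∉ M) ∨ (P u.1 ∧ u.1 ≠ a0 ∧ u.2 ∈ M) ∨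
          (u.1 = b0 ∧ u.2 ∉ closedNbhd X M) := huD
      rcases hu with heq | hadj
      · exact heq
      · rw [boxProd_adj] at hadj
        have hadj' : K.Adj u.1 c ∧ u.2 = x ∨ X.Adj u.2 x ∧ u.1 = c := hadj
        rcases hadj' with ⟨hk, h2⟩ | ⟨hXadj, hu1⟩
        · rcases huD' with ⟨h1, _⟩ | ⟨hP1, _, _⟩ | ⟨h1, hN1⟩
          · rw [h1] at hk
            rcases (hK _ _).1 hk with ⟨_, h⟩ | ⟨h, _⟩
            · exact absurd hPc h
            · exact absurd ha0 h
          · rcases (hK _ _).1 hk with ⟨_, h⟩ | ⟨h, _⟩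
            · exact absurd hPc h
            · exact absurd hP1 h
          · exact absurd (show u.2 ∈ closedNbhd X M from Or.inl (h2.symm ▸ hxM)) hN1
        · rcases huD' with ⟨h1, _⟩ | ⟨_, _, hM1⟩ | ⟨h1, _⟩
          · exact absurd (hu1.symm.trans h1) hca
          · exact absurd hXadj (hMi _ hM1 _ hxM)
          · exact absurd (show P b0 from (hu1.symm.trans h1) ▸ hPc) hb0
    · -- d = (c, x) with c = b0, x ∉ N[M] ; private neighbor (a1, x)
      refine ⟨(a1, x), ?_⟩
      intro u hu huD
      have huD' : (u.1 = a0 ∧ u.2 ∉ M) ∨ (P u.1 ∧ u.1 ≠ a0 ∧ u.2 ∈ M) ∨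
          (u.1 = b0 ∧ u.2 ∉ closedNbhd X M) := huD
      rcases hu with heq | hadj
      · have hu1 : u.1 = a1 := by rw [heq]
        have hu2 : u.2 = x := by rw [heq]
        rcases huD' with ⟨h1, _⟩ | ⟨_, _, hM1⟩ | ⟨h1, _⟩
        · exact absurd (hu1.symm.trans h1) ha01
        · exact absurd (show x ∈ closedNbhd X M from Or.inl (hu2 ▸ hM1)) hxN
        · exact absurd (show P b0 from (hu1.symm.trans h1) ▸ ha1) hb0
      · rw [boxProd_adj] at hadj
        have hadj' : K.Adj u.1 a1 ∧ u.2 = x ∨ X.Adj u.2 x ∧ u.1 = a1 := hadj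
        rcases hadj' with ⟨hk, h2⟩ | ⟨hXadj, hu1⟩
        · rcases huD' with ⟨h1, _⟩ | ⟨hP1, _, _⟩ | ⟨h1, _⟩
          · rw [h1] at hk
            rcases (hK _ _).1 hk with ⟨_, h⟩ | ⟨h, _⟩
            · exact absurd ha1 h
            · exact absurd ha0 h
          · rcases (hK _ _).1 hk with ⟨_, h⟩ | ⟨h, _⟩
            · exact absurd ha1 h
            · exact absurd hP1 h
          · exact Prod.ext (h1.trans hc.symm) h2
        · rcases huD' with ⟨h1, _⟩ | ⟨_, _, hM1⟩ | ⟨h1, _⟩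
          · exact absurd (hu1.symm.trans h1) ha01
          · exact absurd (show x ∈ closedNbhd X M from Or.inr ⟨u.2, hM1, hXadj⟩) hxN
          · exact absurd (show P b0 from (hu1.symm.trans h1) ▸ ha1) hb0

lemma aux9DC_minDom {W V : Type*} (K : SimpleGraph W) (X : SimpleGraph V) (P : W → Prop)
    (hK : ∀ a b, K.Adj a b ↔ (P a ∧ ¬ P b ∨ ¬ P a ∧ P b))
    (u v t : V) (hu : ∀ x, x = u ∨ X.Adj u x) (hv : ∀ x, x = v ∨ X.Adj v x)
    (htu : t ≠ u) (htv : t ≠ v) :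
    MinDom (K □ X) (aux9DC P u v : Set (W × V)) := by
  apply aux9_priv_minDom
  · rintro ⟨c, x⟩
    by_cases hPc : P c
    · rcases hu x with rfl | hadj
      · exact Or.inl (Or.inl ⟨hPc, rfl⟩)
      · refine Or.inr ⟨(c, u), Or.inl ⟨hPc, rfl⟩, ?_⟩
        rw [boxProd_adj]
        exact Or.inr ⟨hadj, rfl⟩
    · rcases hv x with rfl | hadj
      · exact Or.inl (Or.inr ⟨hPc, rfl⟩)
      · refine Or.inr ⟨(c, v), Or.inr ⟨hPc, rfl⟩, ?_⟩
        rw [boxProd_adj]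
        exact Or.inr ⟨hadj, rfl⟩
  · rintro ⟨c, x⟩ hd
    have hd' : (P c ∧ x = u) ∨ (¬ P c ∧ x = v) := hd
    rcases hd' with ⟨hPc, hxu⟩ | ⟨hPc, hxv⟩
    · refine ⟨(c, t), ?_⟩
      intro w hw hwD
      have hwD' : (P w.1 ∧ w.2 = u) ∨ (¬ P w.1 ∧ w.2 = v) := hwD
      rcases hw with heq | hadj
      · have hw2 : w.2 = t := by rw [heq]
        rcases hwD' with ⟨_, h2⟩ | ⟨h1, _⟩
        · exact absurd (hw2.symm.trans h2) htu
        · exact absurd (show P w.1 by rw [heq]; exact hPc) h1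
      · rw [boxProd_adj] at hadj
        have hadj' : K.Adj w.1 c ∧ w.2 = t ∨ X.Adj w.2 t ∧ w.1 = c := hadj
        rcases hadj' with ⟨hk, h2⟩ | ⟨hXadj, h1⟩
        · rcases hwD' with ⟨_, h⟩ | ⟨_, h⟩
          · exact absurd (h2.symm.trans h) htu
          · exact absurd (h2.symm.trans h) htv
        · rcases hwD' with ⟨_, h2⟩ | ⟨hn, _⟩
          · exact Prod.ext h1 (h2.trans hxu.symm)
          · exact absurd (show P w.1 by rw [h1]; exact hPc) hn
    · refine ⟨(c, t), ?_⟩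
      intro w hw hwD
      have hwD' : (P w.1 ∧ w.2 = u) ∨ (¬ P w.1 ∧ w.2 = v) := hwD
      rcases hw with heq | hadj
      · have hw2 : w.2 = t := by rw [heq]
        rcases hwD' with ⟨h1, _⟩ | ⟨_, h2⟩
        · exact absurd (show P c by
            have := h1
            rw [heq] at this
            exact this) hPc
        · exact absurd (hw2.symm.trans h2) htv
      · rw [boxProd_adj] at hadj
        have hadj' : K.Adj w.1 c ∧ w.2 = t ∨ X.Adj w.2 t ∧ w.1 = c := hadj
        rcases hadj' with ⟨hk, h2⟩ | ⟨hXadj, h1⟩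
        · rcases hwD' with ⟨_, h⟩ | ⟨_, h⟩
          · exact absurd (h2.symm.trans h) htu
          · exact absurd (h2.symm.trans h) htv
        · rcases hwD' with ⟨hP1, _⟩ | ⟨_, h2⟩
          · exact absurd (show P c by rw [← h1]; exact hP1) hPc
          · exact Prod.ext h1 (h2.trans hxv.symm)

/- ### Cardinality computations -/

lemma aux9DL_ncard {W V : Type*} [Finite W] [Finite V]
    (X : SimpleGraph V) (P : W → Prop) (a0 b0 : W) (M : Set V)
    (ha0 : P a0) (hb0 : ¬ P b0) :
    (aux9DL X P a0 b0 M).ncard =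
      (Mᶜ).ncard + {p : W × V | P p.1 ∧ p.1 ≠ a0 ∧ p.2 ∈ M}.ncard +
        ((closedNbhd X M)ᶜ).ncard := by
  have hinj1 : Function.Injective (fun x : V => ((a0 : W), x)) :=
    fun x y h => congrArg Prod.snd h
  have hinj3 : Function.Injective (fun x : V => ((b0 : W), x)) :=
    fun x y h => congrArg Prod.snd h
  have hsplit : aux9DL X P a0 b0 M =
      (((fun x : V => (a0, x)) '' Mᶜ) ∪ {p : W × V | P p.1 ∧ p.1 ≠ a0 ∧ p.2 ∈ M}) ∪
        ((fun x : V => (b0, x)) '' (closedNbhd X M)ᶜ) := by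
    ext ⟨c, x⟩
    simp only [aux9DL, Set.mem_setOf_eq, Set.mem_union, Set.mem_image, Set.mem_compl_iff]
    constructor
    · rintro (⟨h1, h2⟩ | h | ⟨h1, h2⟩)
      · exact Or.inl (Or.inl ⟨x, h2, by rw [h1]⟩)
      · exact Or.inl (Or.inr h)
      · exact Or.inr ⟨x, h2, by rw [h1]⟩
    · rintro ((⟨y, hy, heq⟩ | h) | ⟨y, hy, heq⟩)
      · cases heq
        exact Or.inl ⟨rfl, hy⟩
      · exact Or.inr (Or.inl h)
      · cases heq
        exact Or.inr (Or.inr ⟨rfl, hy⟩)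
  rw [hsplit]
  rw [Set.ncard_union_eq ?d1 (Set.toFinite _) (Set.toFinite _),
    Set.ncard_union_eq ?d2 (Set.toFinite _) (Set.toFinite _),
    Set.ncard_image_of_injective _ hinj1, Set.ncard_image_of_injective _ hinj3]
  case d1 =>
    rw [Set.disjoint_left]
    rintro p ((⟨y, hy, heq⟩) | hp) ⟨z, hz, heqz⟩
    · rw [← heq] at heqz
      simp only [Prod.mk.injEq] at heqz
      exact hb0 (show P b0 by rw [heqz.1]; exact ha0)
    · have h1 : P p.1 := hp.1
      rw [← heqz] at h1
      exact hb0 h1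
  case d2 =>
    rw [Set.disjoint_left]
    rintro p ⟨y, hy, heq⟩ hp
    have h2 : p.1 ≠ a0 := hp.2.1
    rw [← heq] at h2
    exact h2 rfl

lemma aux9DC_ncard {W V : Type*} [Finite W] [Finite V]
    (P : W → Prop) (u v : V) :
    (aux9DC P u v : Set (W × V)).ncard = {c : W | P c}.ncard + {c : W | ¬ P c}.ncard := by
  have hinj1 : Function.Injective (fun c : W => (c, u)) := fun x y h => congrArg Prod.fst h
  have hinj2 : Function.Injective (fun c : W => (c, v)) := fun x y h => congrArg Prod.fst h
  have hsplit : (aux9DC P u v : Set (W × V)) =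
      ((fun c : W => (c, u)) '' {c | P c}) ∪ ((fun c : W => (c, v)) '' {c | ¬ P c}) := by
    ext ⟨c, x⟩
    simp only [aux9DC, Set.mem_setOf_eq, Set.mem_union, Set.mem_image]
    constructor
    · rintro (⟨h1, h2⟩ | ⟨h1, h2⟩)
      · exact Or.inl ⟨c, h1, by rw [h2]⟩
      · exact Or.inr ⟨c, h1, by rw [h2]⟩
    · rintro (⟨y, hy, heq⟩ | ⟨y, hy, heq⟩)
      · cases heq; exact Or.inl ⟨hy, rfl⟩
      · cases heq; exact Or.inr ⟨hy, rfl⟩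
  rw [hsplit, Set.ncard_union_eq ?d1 (Set.toFinite _) (Set.toFinite _),
    Set.ncard_image_of_injective _ hinj1, Set.ncard_image_of_injective _ hinj2]
  case d1 =>
    rw [Set.disjoint_left]
    rintro p ⟨y, hy, heq⟩ ⟨z, hz, heqz⟩
    rw [← heq] at heqz
    simp only [Prod.mk.injEq] at heqz
    exact hz (by rw [heqz.1]; exact hy)

/- small counting lemmas about the two sides of `Fin r ⊕ Fin s` -/

lemma aux9_count_left (r s : ℕ) :
    {c : Fin r ⊕ Fin s | c.isLeft = true}.ncard = r := by
  have h : {c : Fin r ⊕ Fin s | c.isLeft = true} = Sum.inl '' Set.univ := by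
    ext c
    cases c <;> simp
  rw [h, Set.ncard_image_of_injective _ Sum.inl_injective, Set.ncard_univ,
    Nat.card_eq_fintype_card, Fintype.card_fin]

lemma aux9_count_right (r s : ℕ) :
    {c : Fin r ⊕ Fin s | c.isRight = true}.ncard = s := by
  have h : {c : Fin r ⊕ Fin s | c.isRight = true} = Sum.inr '' Set.univ := by
    ext c
    cases c <;> simp
  rw [h, Set.ncard_image_of_injective _ Sum.inr_injective, Set.ncard_univ,
    Nat.card_eq_fintype_card, Fintype.card_fin]

lemma aux9_count_not_left (r s : ℕ) :
    {c : Fin r ⊕ Fin s | ¬ c.isLeft = true}.ncard = s := by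
  have h : {c : Fin r ⊕ Fin s | ¬ c.isLeft = true} =
      {c : Fin r ⊕ Fin s | c.isRight = true} := by
    ext c
    cases c <;> simp
  rw [h, aux9_count_right]

lemma aux9_count_not_right (r s : ℕ) :
    {c : Fin r ⊕ Fin s | ¬ c.isRight = true}.ncard = r := by
  have h : {c : Fin r ⊕ Fin s | ¬ c.isRight = true} =
      {c : Fin r ⊕ Fin s | c.isLeft = true} := by
    ext c
    cases c <;> simp
  rw [h, aux9_count_left]

lemma aux9_count_left_ne (r s : ℕ) (z : Fin r) :
    {c : Fin r ⊕ Fin s | c.isLeft = true ∧ c ≠ Sum.inl z}.ncard + 1 = r := by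
  have h : {c : Fin r ⊕ Fin s | c.isLeft = true ∧ c ≠ Sum.inl z} =
      Sum.inl '' ({z}ᶜ : Set (Fin r)) := by
    ext c
    cases c with
    | inl a =>
      simp only [Set.mem_setOf_eq, Set.mem_image, Set.mem_compl_iff, Set.mem_singleton_iff]
      constructor
      · rintro ⟨-, h2⟩
        exact ⟨a, fun haz => h2 (by rw [haz]), rfl⟩
      · rintro ⟨y, hy, heq⟩
        cases heq
        exact ⟨rfl, fun h => hy (Sum.inl_injective h)⟩
    | inr b => simp
  rw [h, Set.ncard_image_of_injective _ Sum.inl_injective]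
  have := Set.ncard_add_ncard_compl ({z} : Set (Fin r)) (Set.toFinite _) (Set.toFinite _)
  rw [Set.ncard_singleton] at this
  rw [Nat.card_eq_fintype_card, Fintype.card_fin] at this
  omega

lemma aux9_count_right_ne (r s : ℕ) (z : Fin s) :
    {c : Fin r ⊕ Fin s | c.isRight = true ∧ c ≠ Sum.inr z}.ncard + 1 = s := by
  have h : {c : Fin r ⊕ Fin s | c.isRight = true ∧ c ≠ Sum.inr z} =
      Sum.inr '' ({z}ᶜ : Set (Fin s)) := by
    ext c
    cases c with
    | inr a =>
      simp only [Set.mem_setOf_eq, Set.mem_image, Set.mem_compl_iff, Set.mem_singleton_iff]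
      constructor
      · rintro ⟨-, h2⟩
        exact ⟨a, fun haz => h2 (by rw [haz]), rfl⟩
      · rintro ⟨y, hy, heq⟩
        cases heq
        exact ⟨rfl, fun h => hy (Sum.inr_injective h)⟩
    | inl b => simp
  rw [h, Set.ncard_image_of_injective _ Sum.inr_injective]
  have := Set.ncard_add_ncard_compl ({z} : Set (Fin s)) (Set.toFinite _) (Set.toFinite _)
  rw [Set.ncard_singleton] at this
  rw [Nat.card_eq_fintype_card, Fintype.card_fin] at this
  omega

/- middle-piece description for `M` a singleton or a pair -/

lemma aux9_mid_single {W V : Type*} (P : W → Prop) (a0 : W) (v : V) :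
    {p : W × V | P p.1 ∧ p.1 ≠ a0 ∧ p.2 ∈ ({v} : Set V)} =
      (fun c : W => (c, v)) '' {c : W | P c ∧ c ≠ a0} := by
  ext ⟨c, x⟩
  simp only [Set.mem_setOf_eq, Set.mem_image, Set.mem_singleton_iff]
  constructor
  · rintro ⟨h1, h2, rfl⟩
    exact ⟨c, ⟨h1, h2⟩, rfl⟩
  · rintro ⟨y, ⟨h1, h2⟩, heq⟩
    cases heq
    exact ⟨h1, h2, rfl⟩

lemma aux9_mid_pair {W V : Type*} (P : W → Prop) (a0 : W) (u v : V) :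
    {p : W × V | P p.1 ∧ p.1 ≠ a0 ∧ p.2 ∈ ({u, v} : Set V)} =
      ((fun c : W => (c, u)) '' {c : W | P c ∧ c ≠ a0}) ∪
        ((fun c : W => (c, v)) '' {c : W | P c ∧ c ≠ a0}) := by
  ext ⟨c, x⟩
  simp only [Set.mem_setOf_eq, Set.mem_image, Set.mem_union, Set.mem_insert_iff,
    Set.mem_singleton_iff]
  constructor
  · rintro ⟨h1, h2, rfl | rfl⟩
    · exact Or.inl ⟨c, ⟨h1, h2⟩, rfl⟩
    · exact Or.inr ⟨c, ⟨h1, h2⟩, rfl⟩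
  · rintro (⟨y, ⟨h1, h2⟩, heq⟩ | ⟨y, ⟨h1, h2⟩, heq⟩)
    · cases heq; exact ⟨h1, h2, Or.inl rfl⟩
    · cases heq; exact ⟨h1, h2, Or.inr rfl⟩

lemma aux9_mid_empty {W V : Type*} (P : W → Prop) (a0 : W) :
    {p : W × V | P p.1 ∧ p.1 ≠ a0 ∧ p.2 ∈ (∅ : Set V)} = ∅ := by
  ext ⟨c, x⟩
  simp

/- closed neighborhood facts -/

lemma aux9_closedNbhd_empty {V : Type*} (X : SimpleGraph V) :
    closedNbhd X (∅ : Set V) = ∅ := by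
  ext v
  simp [closedNbhd]

lemma aux9_closedNbhd_pair {V : Type*} (X : SimpleGraph V) (u v : V) :
    closedNbhd X ({u, v} : Set V) = closedNbhd X {u} ∪ closedNbhd X {v} := by
  ext y
  simp only [closedNbhd, Set.mem_setOf_eq, Set.mem_union, Set.mem_insert_iff,
    Set.mem_singleton_iff]
  constructor
  · rintro ((rfl | rfl) | ⟨z, (rfl | rfl), hz⟩)
    · exact Or.inl (Or.inl rfl)
    · exact Or.inr (Or.inl rfl)
    · exact Or.inl (Or.inr ⟨z, rfl, hz⟩)
    · exact Or.inr (Or.inr ⟨z, rfl, hz⟩)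
  · rintro ((rfl | ⟨z, rfl, hz⟩) | (rfl | ⟨z, rfl, hz⟩))
    · exact Or.inl (Or.inl rfl)
    · exact Or.inr ⟨z, Or.inl rfl, hz⟩
    · exact Or.inl (Or.inr rfl)
    · exact Or.inr ⟨z, Or.inr rfl, hz⟩

/- connectivity facts -/

lemma aux9_exists_adj {V : Type*} [Fintype V] (X : SimpleGraph V)
    (hconn : X.Connected) (h2 : 1 < Fintype.card V) (v : V) : ∃ y, X.Adj v y := by
  obtain ⟨w, hw⟩ := Fintype.exists_ne_of_one_lt_card h2 v
  obtain ⟨p⟩ := hconn.preconnected v w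
  cases p with
  | nil => exact absurd rfl hw
  | cons h q => exact ⟨_, h⟩

lemma aux9_complete {V : Type*} (X : SimpleGraph V) (hconn : X.Connected)
    (h : ∀ u v w : V, u ≠ v → ¬ X.Adj u v → X.Adj w u → ¬ X.Adj w v) :
    ∀ u v : V, u ≠ v → X.Adj u v := by
  have key : ∀ u v : V, X.Reachable u v → u = v ∨ X.Adj u v := by
    intro u v hp
    obtain ⟨p⟩ := hp
    induction p with
    | nil => exact Or.inl rfl
    | @cons a b c hadj p ih =>
      rcases ih with rfl | hbv
      · exact Or.inr hadj
      · by_cases hac : a = c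
        · exact Or.inl hac
        · by_cases hA : X.Adj a c
          · exact Or.inr hA
          · exact absurd hbv (h a c b hac hA hadj.symm)
  intro u v huv
  rcases key u v (hconn.preconnected u v) with rfl | hA
  · exact absurd rfl huv
  · exact hA

theorem stmt9 {V : Type*} [Fintype V] (X : SimpleGraph V)
    (hconn : X.Connected) (hcard : 3 ≤ Fintype.card V)
    (r s : ℕ) (hr : 2 ≤ r) (hrs : r ≤ s) :
    ¬ WellDom (completeBipartiteGraph (Fin r) (Fin s) □ X) := by
  classical
  intro hWD
  have hs : 2 ≤ s := hr.trans hrs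
  set n := Fintype.card V with hn
  -- distinguished vertices of the bipartite factor
  have h0r : (0 : ℕ) < r := by omega
  have h1r : (1 : ℕ) < r := by omega
  have h0s : (0 : ℕ) < s := by omega
  have h1s : (1 : ℕ) < s := by omega
  set z0r : Fin r := ⟨0, h0r⟩
  set z1r : Fin r := ⟨1, h1r⟩
  set z0s : Fin s := ⟨0, h0s⟩
  set z1s : Fin s := ⟨1, h1s⟩
  set K := completeBipartiteGraph (Fin r) (Fin s) with hKdef
  set PL : Fin r ⊕ Fin s → Prop := fun c => c.isLeft = true with hPL
  set PR : Fin r ⊕ Fin s → Prop := fun c => c.isRight = true with hPR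
  have hKL : ∀ a b, K.Adj a b ↔ (PL a ∧ ¬ PL b ∨ ¬ PL a ∧ PL b) := by
    intro a b
    rw [hKdef, completeBipartiteGraph_adj]
    cases a <;> cases b <;> simp [hPL]
  have hKR : ∀ a b, K.Adj a b ↔ (PR a ∧ ¬ PR b ∨ ¬ PR a ∧ PR b) := by
    intro a b
    rw [hKdef, completeBipartiteGraph_adj]
    cases a <;> cases b <;> simp [hPR]
  have hnb : ∀ v : V, ∃ y, X.Adj v y :=
    aux9_exists_adj X hconn (by omega)
  have hnV : (Set.univ : Set V).ncard = n := by
    rw [Set.ncard_univ, Nat.card_eq_fintype_card]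
  -- the big minimal dominating set, of size 2n (the L-version)
  have hbigL : MinDom (K □ X) (aux9DL X PL (Sum.inl z0r) (Sum.inr z0s) (∅ : Set V)) := by
    apply aux9DL_minDom K X PL hKL (Sum.inl z0r) (Sum.inl z1r) (Sum.inr z0s) (Sum.inr z1s)
    · simp [hPL]
    · simp [hPL]
    · simp [z0r, z1r, Fin.ext_iff]
    · simp [hPL]
    · simp [hPL]
    · simp [z0s, z1s, Fin.ext_iff]
    · intro a ha
      simp at ha
    · exact hnb
  have hbigL_card : (aux9DL X PL (Sum.inl z0r) (Sum.inr z0s) (∅ : Set V)).ncard = n + n := by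
    rw [aux9DL_ncard X PL _ _ _ (by simp [hPL]) (by simp [hPL])]
    rw [aux9_mid_empty, aux9_closedNbhd_empty]
    simp only [Set.compl_empty, Set.ncard_empty]
    rw [hnV]
    omega
  -- degree-type quantities
  have hNv_le : ∀ v : V, (closedNbhd X {v}).ncard ≤ n := by
    intro v
    calc (closedNbhd X {v}).ncard ≤ (Set.univ : Set V).ncard :=
          Set.ncard_le_ncard (Set.subset_univ _) (Set.toFinite _)
      _ = n := hnV
  have hNv_pos : ∀ v : V, 1 ≤ (closedNbhd X {v}).ncard := by
    intro v
    have : v ∈ closedNbhd X {v} := Or.inl rfl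
    have hp := (Set.ncard_pos (Set.toFinite _)).2 ⟨v, this⟩
    omega
  have hcompl_card : ∀ (S : Set V), (Sᶜ).ncard + S.ncard = n := by
    intro S
    have := Set.ncard_add_ncard_compl S (Set.toFinite _) (Set.toFinite _)
    rw [Nat.card_eq_fintype_card] at this
    omega
  have hsingle_indep : ∀ v : V, ∀ a ∈ ({v} : Set V), ∀ b ∈ ({v} : Set V), ¬ X.Adj a b := by
    intro v a ha b hb
    rw [Set.mem_singleton_iff] at ha hb
    subst ha; subst hb
    exact X.irrefl
  by_cases hcase1 : ∃ v : V, (closedNbhd X {v}).ncard + 2 ≠ r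
  · -- Case 1 : some closed neighborhood has size ≠ r - 2
    obtain ⟨v, hv⟩ := hcase1
    have hminv : MinDom (K □ X) (aux9DL X PL (Sum.inl z0r) (Sum.inr z0s) ({v} : Set V)) := by
      apply aux9DL_minDom K X PL hKL (Sum.inl z0r) (Sum.inl z1r) (Sum.inr z0s) (Sum.inr z1s)
      · simp [hPL]
      · simp [hPL]
      · simp [z0r, z1r, Fin.ext_iff]
      · simp [hPL]
      · simp [hPL]
      · simp [z0s, z1s, Fin.ext_iff]
      · exact hsingle_indep v
      · exact hnb
    have hcardv : (aux9DL X PL (Sum.inl z0r) (Sum.inr z0s) ({v} : Set V)).ncard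
        = (({v} : Set V)ᶜ).ncard + {c : Fin r ⊕ Fin s | PL c ∧ c ≠ Sum.inl z0r}.ncard
          + ((closedNbhd X {v})ᶜ).ncard := by
      rw [aux9DL_ncard X PL _ _ _ (by simp [hPL]) (by simp [hPL])]
      rw [aux9_mid_single]
      rw [Set.ncard_image_of_injective _ (fun x y h => congrArg Prod.fst h)]
    have heq := hWD _ _ hminv hbigL
    rw [hcardv, hbigL_card] at heq
    have h1 := hcompl_card ({v} : Set V)
    rw [Set.ncard_singleton] at h1
    have h2 := aux9_count_left_ne r s z0r
    have h3 := hcompl_card (closedNbhd X {v})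
    have h4 := hNv_le v
    have h5 := hNv_pos v
    -- `{c | PL c ∧ c ≠ inl z0r}` is the same set as in aux9_count_left_ne
    have h2' : {c : Fin r ⊕ Fin s | PL c ∧ c ≠ Sum.inl z0r}.ncard + 1 = r := h2
    omega
  · push_neg at hcase1
    by_cases hcase2 : r ≠ s
    · -- Case 2 : all closed neighborhoods have size r - 2, but r < s: use the R-version
      obtain ⟨v⟩ : Nonempty V := by
        have : 0 < Fintype.card V := by omega
        exact Fintype.card_pos_iff.1 this
      have hbigR : MinDom (K □ X) (aux9DL X PR (Sum.inr z0s) (Sum.inl z0r) (∅ : Set V)) := by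
        apply aux9DL_minDom K X PR hKR (Sum.inr z0s) (Sum.inr z1s) (Sum.inl z0r) (Sum.inl z1r)
        · simp [hPR]
        · simp [hPR]
        · simp [z0s, z1s, Fin.ext_iff]
        · simp [hPR]
        · simp [hPR]
        · simp [z0r, z1r, Fin.ext_iff]
        · intro a ha; simp at ha
        · exact hnb
      have hbigR_card : (aux9DL X PR (Sum.inr z0s) (Sum.inl z0r) (∅ : Set V)).ncard = n + n := by
        rw [aux9DL_ncard X PR _ _ _ (by simp [hPR]) (by simp [hPR])]
        rw [aux9_mid_empty, aux9_closedNbhd_empty]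
        simp only [Set.compl_empty, Set.ncard_empty]
        rw [hnV]
        omega
      have hminv : MinDom (K □ X) (aux9DL X PR (Sum.inr z0s) (Sum.inl z0r) ({v} : Set V)) := by
        apply aux9DL_minDom K X PR hKR (Sum.inr z0s) (Sum.inr z1s) (Sum.inl z0r) (Sum.inl z1r)
        · simp [hPR]
        · simp [hPR]
        · simp [z0s, z1s, Fin.ext_iff]
        · simp [hPR]
        · simp [hPR]
        · simp [z0r, z1r, Fin.ext_iff]
        · exact hsingle_indep v
        · exact hnb
      have hcardv : (aux9DL X PR (Sum.inr z0s) (Sum.inl z0r) ({v} : Set V)).ncard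
          = (({v} : Set V)ᶜ).ncard + {c : Fin r ⊕ Fin s | PR c ∧ c ≠ Sum.inr z0s}.ncard
            + ((closedNbhd X {v})ᶜ).ncard := by
        rw [aux9DL_ncard X PR _ _ _ (by simp [hPR]) (by simp [hPR])]
        rw [aux9_mid_single]
        rw [Set.ncard_image_of_injective _ (fun x y h => congrArg Prod.fst h)]
      have heq := hWD _ _ hminv hbigR
      rw [hcardv, hbigR_card] at heq
      have h1 := hcompl_card ({v} : Set V)
      rw [Set.ncard_singleton] at h1
      have h2 : {c : Fin r ⊕ Fin s | PR c ∧ c ≠ Sum.inr z0s}.ncard + 1 = s :=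
        aux9_count_right_ne r s z0s
      have h3 := hcompl_card (closedNbhd X {v})
      have h4 := hNv_le v
      have h5 := hNv_pos v
      have h6 := hcase1 v
      omega
    · push_neg at hcase2
      by_cases hcase3 : ∃ u v w : V, u ≠ v ∧ ¬ X.Adj u v ∧ X.Adj w u ∧ X.Adj w v
      · -- Case 3 : a non-edge with a common neighbor
        obtain ⟨u, v, w, huv, hnadj, hwu, hwv⟩ := hcase3
        have hMi : ∀ a ∈ ({u, v} : Set V), ∀ b ∈ ({u, v} : Set V), ¬ X.Adj a b := by
          intro a ha b hb
          rcases ha with rfl | ha <;> rcases hb with rfl | hb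
          · exact X.irrefl
          · rw [Set.mem_singleton_iff] at hb; subst hb; exact hnadj
          · rw [Set.mem_singleton_iff] at ha; subst ha
            exact fun h => hnadj h.symm
          · rw [Set.mem_singleton_iff] at ha hb; subst ha; subst hb; exact X.irrefl
        have hminuv : MinDom (K □ X)
            (aux9DL X PL (Sum.inl z0r) (Sum.inr z0s) ({u, v} : Set V)) := by
          apply aux9DL_minDom K X PL hKL (Sum.inl z0r) (Sum.inl z1r) (Sum.inr z0s) (Sum.inr z1s)
          · simp [hPL]
          · simp [hPL]
          · simp [z0r, z1r, Fin.ext_iff]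
          · simp [hPL]
          · simp [hPL]
          · simp [z0s, z1s, Fin.ext_iff]
          · exact hMi
          · exact hnb
        have hA : {c : Fin r ⊕ Fin s | PL c ∧ c ≠ Sum.inl z0r}.ncard + 1 = r :=
          aux9_count_left_ne r s z0r
        have hcarduv : (aux9DL X PL (Sum.inl z0r) (Sum.inr z0s) ({u, v} : Set V)).ncard
            = (({u, v} : Set V)ᶜ).ncard
              + ({c : Fin r ⊕ Fin s | PL c ∧ c ≠ Sum.inl z0r}.ncard
                + {c : Fin r ⊕ Fin s | PL c ∧ c ≠ Sum.inl z0r}.ncard)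
              + ((closedNbhd X ({u, v} : Set V))ᶜ).ncard := by
          rw [aux9DL_ncard X PL _ _ _ (by simp [hPL]) (by simp [hPL])]
          rw [aux9_mid_pair]
          rw [Set.ncard_union_eq ?duv (Set.toFinite _) (Set.toFinite _)]
          rw [Set.ncard_image_of_injective _ (fun x y h => congrArg Prod.fst h),
            Set.ncard_image_of_injective _ (fun x y h => congrArg Prod.fst h)]
          case duv =>
            rw [Set.disjoint_left]
            rintro p ⟨y, hy, heq⟩ ⟨z, hz, heqz⟩
            rw [← heq] at heqz
            simp only [Prod.mk.injEq] at heqz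
            exact huv heqz.2.symm
        -- bound the closed neighborhood of the pair
        have hwu' : w ∈ closedNbhd X {u} := Or.inr ⟨u, rfl, hwu.symm⟩
        have hwv' : w ∈ closedNbhd X {v} := Or.inr ⟨v, rfl, hwv.symm⟩
        have hNuv : (closedNbhd X ({u, v} : Set V)).ncard
            ≤ (closedNbhd X {u}).ncard + ((closedNbhd X {v}).ncard - 1) := by
          rw [aux9_closedNbhd_pair]
          have hsub : closedNbhd X {u} ∪ closedNbhd X {v}
              = closedNbhd X {u} ∪ (closedNbhd X {v} \ {w}) := by
            ext y
            simp only [Set.mem_union, Set.mem_diff, Set.mem_singleton_iff]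
            constructor
            · rintro (h | h)
              · exact Or.inl h
              · by_cases hyw : y = w
                · subst hyw; exact Or.inl hwu'
                · exact Or.inr ⟨h, hyw⟩
            · rintro (h | ⟨h, -⟩)
              · exact Or.inl h
              · exact Or.inr h
          rw [hsub]
          calc (closedNbhd X {u} ∪ (closedNbhd X {v} \ {w})).ncard
              ≤ (closedNbhd X {u}).ncard + (closedNbhd X {v} \ {w}).ncard :=
                Set.ncard_union_le _ _
            _ = (closedNbhd X {u}).ncard + ((closedNbhd X {v}).ncard - 1) := by
                rw [Set.ncard_diff_singleton_of_mem hwv']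
        have heq := hWD _ _ hminuv hbigL
        rw [hcarduv, hbigL_card] at heq
        have h1 := hcompl_card ({u, v} : Set V)
        rw [Set.ncard_pair huv] at h1
        have h3 := hcompl_card (closedNbhd X ({u, v} : Set V))
        have h4u := hcase1 u
        have h4v := hcase1 v
        have h5u := hNv_pos u
        have h5v := hNv_pos v
        have h6 : (closedNbhd X ({u, v} : Set V)).ncard ≤ n := by
          calc (closedNbhd X ({u, v} : Set V)).ncard ≤ (Set.univ : Set V).ncard :=
                Set.ncard_le_ncard (Set.subset_univ _) (Set.toFinite _)
            _ = n := hnV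
        omega
      · -- Case 4 : X is complete and r = s = n + 2
        push_neg at hcase3
        have hcomp : ∀ u v : V, u ≠ v → X.Adj u v := by
          apply aux9_complete X hconn
          intro u v w huv hnadj hwu
          exact hcase3 u v w huv hnadj hwu
        -- closed neighborhoods are everything
        have hNall : ∀ v : V, closedNbhd X {v} = Set.univ := by
          intro v
          ext y
          simp only [Set.mem_univ, iff_true]
          by_cases hyv : y = v
          · exact Or.inl hyv
          · exact Or.inr ⟨v, rfl, hcomp v y (fun h => hyv h.symm)⟩
        have hrn : r = n + 2 := by
          have hvv : Nonempty V := Fintype.card_pos_iff.mp (by omega)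
          have := hcase1 hvv.some
          rw [hNall, hnV] at this
          omega
        -- pick three distinct vertices
        have hne : Nonempty V := Fintype.card_pos_iff.mp (by omega)
        obtain ⟨v⟩ := hne
        obtain ⟨u, huv⟩ := Fintype.exists_ne_of_one_lt_card (by omega) v
        have hssub : ({u, v} : Set V) ⊂ Set.univ := by
          refine ⟨Set.subset_univ _, fun hsub => ?_⟩
          have h2 : (Set.univ : Set V).ncard ≤ ({u, v} : Set V).ncard :=
            Set.ncard_le_ncard hsub (Set.toFinite _)
          rw [hnV, Set.ncard_pair huv] at h2
          omega
        obtain ⟨t, -, ht⟩ := Set.exists_of_ssubset hssub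
        simp only [Set.mem_insert_iff, Set.mem_singleton_iff, not_or] at ht
        obtain ⟨htu, htv⟩ := ht
        have hucomp : ∀ x, x = u ∨ X.Adj u x := by
          intro x
          by_cases hx : x = u
          · exact Or.inl hx
          · exact Or.inr (hcomp u x (fun h => hx h.symm))
        have hvcomp : ∀ x, x = v ∨ X.Adj v x := by
          intro x
          by_cases hx : x = v
          · exact Or.inl hx
          · exact Or.inr (hcomp v x (fun h => hx h.symm))
        have hminC : MinDom (K □ X) (aux9DC PL u v : Set ((Fin r ⊕ Fin s) × V)) :=
          aux9DC_minDom K X PL hKL u v t hucomp hvcomp htu htv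
        have hcardC : (aux9DC PL u v : Set ((Fin r ⊕ Fin s) × V)).ncard = r + s := by
          rw [aux9DC_ncard]
          rw [show {c : Fin r ⊕ Fin s | PL c} = {c : Fin r ⊕ Fin s | c.isLeft = true} from rfl]
          rw [show {c : Fin r ⊕ Fin s | ¬ PL c} =
            {c : Fin r ⊕ Fin s | ¬ c.isLeft = true} from rfl]
          rw [aux9_count_left, aux9_count_not_left]
        have heq := hWD _ _ hminC hbigL
        rw [hcardC, hbigL_card] at heq
        omega
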